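/- For every integer k ≥ 1, let (U_n)_{n≥0} be the Shallit sequence defined by U_0 = 0, U_1 = 1, and U_{n+2} = (4k+2)·U_{n+1} − U_n for all n ≥ 0. Then for every integer e ≥ 1 the terms U_0, U_1, …, U_{2^e − 1} are pairwise incongruent modulo 2^e; consequently the discriminator satisfies D_U(2^e) = 2^e for every e ≥ 1. -/

import Mathlib

/-- The companion (Lucas-type) sequence for the Shallit sequence. -/
def Vseq (k : ℕ) : ℕ → ℤ
  | 0 => 2
  | 1 => 4 * (k : ℤ) + 2
  | (n+2) => (4 * (k : ℤ) + 2) * Vseq k (n+1) - Vseq k n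

lemma Vseq_rec (k n : ℕ) :
    Vseq k (n+2) = (4 * (k : ℤ) + 2) * Vseq k (n+1) - Vseq k n := rfl

lemma Vseq_eq (k : ℕ) (U : ℕ → ℤ) (h0 : U 0 = 0) (h1 : U 1 = 1)
    (hrec : ∀ n : ℕ, U (n + 2) = (4 * (k : ℤ) + 2) * U (n + 1) - U n) :
    ∀ n, Vseq k (n+1) = U (n+2) - U n := by
  have key : ∀ n, Vseq k (n+1) = U (n+2) - U n ∧ Vseq k (n+2) = U (n+3) - U (n+1) := by
    intro n
    induction n with
    | zero =>
      constructor
      · show (4 * (k:ℤ) + 2) = U 2 - U 0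
        rw [hrec 0, h0, h1]; ring
      · show Vseq k 2 = U 3 - U 1
        rw [Vseq_rec, hrec 1, hrec 0, h0, h1]
        show (4 * (k:ℤ) + 2) * (4 * (k:ℤ) + 2) - Vseq k 0 = _
        show (4 * (k:ℤ) + 2) * (4 * (k:ℤ) + 2) - 2 = _
        ring
    | succ n ih =>
      refine ⟨ih.2, ?_⟩
      have e1 : n + 1 + 2 = n + 3 := rfl
      have e2 : n + 1 + 1 = n + 2 := rfl
      have h4 : U (n + 4) = (4 * (k : ℤ) + 2) * U (n + 3) - U (n + 2) := hrec (n + 2)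
      have h2 : U (n + 2) = (4 * (k : ℤ) + 2) * U (n + 1) - U n := hrec n
      have e3 : n + 1 + 3 = n + 4 := rfl
      rw [e1, e2, e3, Vseq_rec, ih.1, ih.2]
      linear_combination h2 - h4
  exact fun n => (key n).1

/-- The key multiplication identity: `V_{c+b} · U_b = U_{c+2b} − U_c`. -/
lemma ident (k : ℕ) (U : ℕ → ℤ) (h0 : U 0 = 0) (h1 : U 1 = 1)
    (hrec : ∀ n : ℕ, U (n + 2) = (4 * (k : ℤ) + 2) * U (n + 1) - U n) :
    ∀ b c, Vseq k (c + b) * U b = U (c + 2 * b) - U c := by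
  have key : ∀ b, (∀ c, Vseq k (c + b) * U b = U (c + 2 * b) - U c) ∧
      (∀ c, Vseq k (c + (b+1)) * U (b+1) = U (c + 2 * (b+1)) - U c) := by
    intro b
    induction b with
    | zero =>
      constructor
      · intro c; simp [h0]
      · intro c
        have := Vseq_eq k U h0 h1 hrec c
        simp only [h1, mul_one, show c + 2 * (0+1) = c + 2 from rfl, show c + (0+1) = c + 1 from rfl]
        exact this
    | succ b ih =>
      refine ⟨ih.2, ?_⟩
      intro c
      have hU : U (b + 2) = (4 * (k : ℤ) + 2) * U (b + 1) - U b := hrec b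
      have i1 : Vseq k (c + 1 + (b + 1)) * U (b + 1) = U (c + 1 + 2 * (b+1)) - U (c+1) := ih.2 (c+1)
      have i2 : Vseq k (c + 2 + b) * U b = U (c + 2 + 2 * b) - U (c+2) := ih.1 (c+2)
      have g1 : U (c + 2*b + 4) = (4 * (k : ℤ) + 2) * U (c + 2*b + 3) - U (c + 2*b + 2) := hrec (c + 2*b + 2)
      have g2 : U (c + 2) = (4 * (k : ℤ) + 2) * U (c + 1) - U c := hrec c
      have e1 : c + 1 + (b + 1) = c + b + 2 := by omega
      have e2 : c + 2 + b = c + b + 2 := by omega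
      have e3 : c + 1 + 2 * (b + 1) = c + 2*b + 3 := by omega
      have e4 : c + 2 + 2 * b = c + 2*b + 2 := by omega
      have e5 : c + (b + 1 + 1) = c + b + 2 := by omega
      have e6 : c + 2 * (b + 1 + 1) = c + 2*b + 4 := by omega
      rw [e1, e3] at i1
      rw [e2, e4] at i2
      rw [e5, e6, hU]
      linear_combination (4 * (k : ℤ) + 2) * i1 - i2 - g1 + g2
  exact fun b => (key b).1

lemma Uparity (k : ℕ) (U : ℕ → ℤ) (h0 : U 0 = 0) (h1 : U 1 = 1)
    (hrec : ∀ n : ℕ, U (n + 2) = (4 * (k : ℤ) + 2) * U (n + 1) - U n) :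
    ∀ n, U n % 2 = (n : ℤ) % 2 := by
  have key : ∀ n, U n % 2 = (n : ℤ) % 2 ∧ U (n+1) % 2 = ((n : ℤ)+1) % 2 := by
    intro n
    induction n with
    | zero => simp [h0, h1]
    | succ n ih =>
      refine ⟨by push_cast; exact ih.2, ?_⟩
      simp only [show n+1+1 = n+2 from rfl]
      obtain ⟨t, ht⟩ : ∃ t : ℤ, U (n+2) = 2 * t - U n :=
        ⟨(2 * k + 1) * U (n+1), by rw [hrec n]; ring⟩
      have := ih.1
      have := ih.2
      push_cast
      omega
  exact fun n => (key n).1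

lemma Vmod4 (k : ℕ) : ∀ n, Vseq k n % 4 = 2 := by
  have key : ∀ n, Vseq k n % 4 = 2 ∧ Vseq k (n+1) % 4 = 2 := by
    intro n
    induction n with
    | zero =>
      refine ⟨by simp [Vseq], ?_⟩
      show (4 * (k:ℤ) + 2) % 4 = 2
      omega
    | succ n ih =>
      refine ⟨ih.2, ?_⟩
      simp only [show n+1+1 = n+2 from rfl]
      obtain ⟨a, ha⟩ : ∃ a : ℤ, Vseq k (n+1) = 4 * a + 2 := ⟨Vseq k (n+1) / 4, by omega⟩
      obtain ⟨t, ht⟩ : ∃ t : ℤ, Vseq k (n+2) = 4 * t - Vseq k n :=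
        ⟨(4*k+2)*a + 2*k + 1, by rw [Vseq_rec, ha]; ring⟩
      have := ih.1
      omega
  exact fun n => (key n).1

lemma odd_coprime_pow (s : ℕ) (w x : ℤ) (hw : w % 2 = 1) (h : 2 ^ s ∣ w * x) :
    (2:ℤ) ^ s ∣ x := by
  have hc : IsCoprime (2:ℤ) w := ⟨-(w/2), 1, by omega⟩
  exact (hc.pow_left).dvd_of_dvd_mul_left h

/-- The 2-adic valuation of `U n` is at most that of `n`. -/
lemma Udvd (k : ℕ) (U : ℕ → ℤ) (h0 : U 0 = 0) (h1 : U 1 = 1)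
    (hrec : ∀ n : ℕ, U (n + 2) = (4 * (k : ℤ) + 2) * U (n + 1) - U n) :
    ∀ n t, (2:ℤ) ^ t ∣ U n → 2 ^ t ∣ n := by
  intro n
  induction n using Nat.strong_induction_on with
  | _ n IH =>
    intro t hdvd
    rcases Nat.eq_zero_or_pos n with rfl | hn
    · exact Dvd.intro 0 rfl
    rcases Nat.even_or_odd n with ⟨m, hm⟩ | hodd
    · have hm2 : n = 2 * m := by omega
      have hmpos : 0 < m := by omega
      rcases t with _ | s
      · simp
      · have hid : Vseq k m * U m = U (2 * m) := by
          have := ident k U h0 h1 hrec m 0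
          simpa [h0] using this
        obtain ⟨a, ha⟩ : ∃ a : ℤ, Vseq k m = 4 * a + 2 := ⟨Vseq k m / 4, by have := Vmod4 k m; omega⟩
        have hUn : U n = 2 * ((2 * a + 1) * U m) := by
          rw [hm2, ← hid, ha]; ring
        have h2 : (2:ℤ) ^ s ∣ (2 * a + 1) * U m := by
          have : (2:ℤ) ^ (s+1) ∣ 2 * ((2 * a + 1) * U m) := hUn ▸ hdvd
          rw [pow_succ'] at this
          exact (mul_dvd_mul_iff_left (by norm_num : (2:ℤ) ≠ 0)).mp this
        have h3 : (2:ℤ) ^ s ∣ U m := odd_coprime_pow s _ _ (by omega) h2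
        have h4 : 2 ^ s ∣ m := IH m (by omega) s h3
        rw [hm2, pow_succ']
        exact mul_dvd_mul_left 2 h4
    · rcases t with _ | s
      · simp
      · exfalso
        have hpar := Uparity k U h0 h1 hrec n
        have h2 : (2:ℤ) ∣ U n := dvd_trans (dvd_pow_self 2 (Nat.succ_ne_zero s)) hdvd
        have : (n:ℤ) % 2 = 1 := by
          obtain ⟨m, hm⟩ := hodd
          omega
        omega

/-- The core injectivity: `U 0, …, U (2^e − 1)` are pairwise incongruent mod `2^e`. -/
lemma core (k : ℕ) (U : ℕ → ℤ) (h0 : U 0 = 0) (h1 : U 1 = 1)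
    (hrec : ∀ n : ℕ, U (n + 2) = (4 * (k : ℤ) + 2) * U (n + 1) - U n)
    (e : ℕ) (he : 1 ≤ e) :
    ∀ i < 2 ^ e, ∀ j < 2 ^ e, (2:ℤ) ^ e ∣ U j - U i → i = j := by
  have half : ∀ i j : ℕ, i ≤ j → j < 2 ^ e → (2:ℤ) ^ e ∣ U j - U i → i = j := by
    intro i j hij hj hdvd
    obtain ⟨s, rfl⟩ : ∃ s, e = s + 1 := ⟨e - 1, by omega⟩
    have h2 : (2:ℤ) ∣ U j - U i := dvd_trans (dvd_pow_self 2 (Nat.succ_ne_zero s)) hdvd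
    have hpi := Uparity k U h0 h1 hrec i
    have hpj := Uparity k U h0 h1 hrec j
    obtain ⟨d, rfl⟩ : ∃ d, j = i + 2 * d := by
      have : (i : ℤ) % 2 = (j : ℤ) % 2 := by omega
      have : i % 2 = j % 2 := by omega
      exact ⟨(j - i) / 2, by omega⟩
    have hid : Vseq k (i + d) * U d = U (i + 2 * d) - U i := ident k U h0 h1 hrec d i
    obtain ⟨a, ha⟩ : ∃ a : ℤ, Vseq k (i + d) = 4 * a + 2 :=
      ⟨Vseq k (i + d) / 4, by have := Vmod4 k (i + d); omega⟩
    have hs : (2:ℤ) ^ s ∣ (2 * a + 1) * U d := by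
      have h1' : U (i + 2 * d) - U i = 2 * ((2 * a + 1) * U d) := by
        rw [← hid, ha]; ring
      have : (2:ℤ) ^ (s+1) ∣ 2 * ((2 * a + 1) * U d) := h1' ▸ hdvd
      rw [pow_succ'] at this
      exact (mul_dvd_mul_iff_left (by norm_num : (2:ℤ) ≠ 0)).mp this
    have hUd : (2:ℤ) ^ s ∣ U d := odd_coprime_pow s _ _ (by omega) hs
    have hd : 2 ^ s ∣ d := Udvd k U h0 h1 hrec d s hUd
    rcases Nat.eq_zero_or_pos d with rfl | hdpos
    · simp
    · exfalso
      have : 2 ^ s ≤ d := Nat.le_of_dvd hdpos hd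
      have : 2 ^ (s+1) ≤ i + 2 * d := by
        rw [pow_succ]; omega
      omega
  intro i hi j hj hdvd
  rcases le_total i j with h | h
  · exact half i j h hj hdvd
  · exact (half j i h hi ((dvd_sub_comm).mp hdvd)).symm

/-- The discriminator of a sequence `U`: the smallest positive integer `m` such that
`U 0, …, U (n-1)` are pairwise incongruent modulo `m`. -/
noncomputable def discriminator (U : ℕ → ℤ) (n : ℕ) : ℕ :=
  sInf {m : ℕ | 0 < m ∧ ∀ i < n, ∀ j < n, U i ≡ U j [ZMOD (m : ℤ)] → i = j}

/-- For every `k ≥ 1`, the Shallit sequence `U 0 = 0`, `U 1 = 1`,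
`U (n+2) = (4k+2)·U (n+1) − U n` has `U 0, …, U (2^e − 1)` pairwise incongruent modulo
`2^e` for every `e ≥ 1`; consequently `D_U(2^e) = 2^e` for every `e ≥ 1`. -/
theorem stmt15 (k : ℕ) (hk : 1 ≤ k) (U : ℕ → ℤ) (h0 : U 0 = 0) (h1 : U 1 = 1)
    (hrec : ∀ n : ℕ, U (n + 2) = (4 * (k : ℤ) + 2) * U (n + 1) - U n) :
    ∀ e : ℕ, 1 ≤ e →
      (∀ i < 2 ^ e, ∀ j < 2 ^ e, U i ≡ U j [ZMOD (2 ^ e : ℤ)] → i = j) ∧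
      discriminator U (2 ^ e) = 2 ^ e := by
  intro e he
  have hinj : ∀ i < 2 ^ e, ∀ j < 2 ^ e, U i ≡ U j [ZMOD (2 ^ e : ℤ)] → i = j := by
    intro i hi j hj hmod
    exact core k U h0 h1 hrec e he i hi j hj hmod.dvd
  refine ⟨hinj, ?_⟩
  set S : Set ℕ := {m : ℕ | 0 < m ∧ ∀ i < 2 ^ e, ∀ j < 2 ^ e, U i ≡ U j [ZMOD (m : ℤ)] → i = j}
  have hmem : (2 ^ e : ℕ) ∈ S := by
    refine ⟨Nat.pow_pos (by norm_num), ?_⟩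
    intro i hi j hj hmod
    apply hinj i hi j hj
    have : ((2 ^ e : ℕ) : ℤ) = (2 : ℤ) ^ e := by push_cast; ring
    rwa [this] at hmod
  have hlb : ∀ m ∈ S, 2 ^ e ≤ m := by
    intro m hm
    by_contra hlt
    push_neg at hlt
    obtain ⟨hmpos, hinjm⟩ := hm
    haveI : NeZero m := ⟨hmpos.ne'⟩
    have finj : Function.Injective (fun i : Fin (2 ^ e) => ((U i : ℤ) : ZMod m)) := by
      intro i j hij
      have : U i ≡ U j [ZMOD (m : ℤ)] := by
        rwa [ZMod.intCast_eq_intCast_iff'] at hij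
      exact Fin.ext (hinjm i i.isLt j j.isLt this)
    have := Fintype.card_le_of_injective _ finj
    simp [ZMod.card] at this
    omega
  exact le_antisymm (Nat.sInf_le hmem) (le_csInf ⟨_, hmem⟩ hlb)
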